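/- arXiv:0905.4662 — 4 statements merged into one kernel-verified Lean document; each statement's English description precedes it below -/
import Mathlib

section
/- Let φ : ℝ → ℝ → ℝ satisfy antisymmetry φ(x,y) = -φ(y,x) and monotonicity: x - y ≤ v - w implies φ(x,y) ≤ φ(v,w). Then for any finite graph G and any x, y : V → ℝ, the inner product ⟨Φ x - Φ y, x - y⟩ ≤ 0, where (Φ c)(i) = Σ_{j ∈ Nbr(i)} φ(c(j), c(i)). -/
theorem stmt_2 {V : Type} [Fintype V] [DecidableEq V]
    (G : SimpleGraph V) [DecidableRel G.Adj]
    (φ : ℝ → ℝ → ℝ)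
    (hanti : ∀ x y, φ x y = -φ y x)
    (hmono : ∀ x y v w : ℝ, x - y ≤ v - w → φ x y ≤ φ v w)
    (Φ : (V → ℝ) → V → ℝ)
    (hΦ : ∀ d i, Φ d i = ∑ j ∈ G.neighborFinset i, φ (d j) (d i))
    (x y : V → ℝ) :
    ∑ i, (Φ x i - Φ y i) * (x i - y i) ≤ 0 := by
  set f : V → V → ℝ := fun i j => (φ (x j) (x i) - φ (y j) (y i)) * (x i - y i) with hf
  have key : ∀ i j, f i j + f j i ≤ 0 := by
    intro i j
    have h1 : φ (x i) (x j) = -φ (x j) (x i) := hanti _ _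
    have h2 : φ (y i) (y j) = -φ (y j) (y i) := hanti _ _
    have heq : f i j + f j i
        = (φ (x j) (x i) - φ (y j) (y i)) * ((x i - y i) - (x j - y j)) := by
      simp only [hf, h1, h2]; ring
    rw [heq]
    rcases le_total (x j - y j) (x i - y i) with h | h
    · have ha : φ (x j) (x i) ≤ φ (y j) (y i) := hmono _ _ _ _ (by linarith)
      nlinarith
    · have ha : φ (y j) (y i) ≤ φ (x j) (x i) := hmono _ _ _ _ (by linarith)
      nlinarith
  have hsum : ∑ i, (Φ x i - Φ y i) * (x i - y i)
      = ∑ i, ∑ j, (if G.Adj i j then f i j else 0) := by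
    refine Finset.sum_congr rfl fun i _ => ?_
    rw [hΦ, hΦ, ← Finset.sum_sub_distrib, Finset.sum_mul,
      SimpleGraph.neighborFinset_eq_filter, Finset.sum_filter]
  have hswap : ∑ i, ∑ j, (if G.Adj i j then f i j else 0)
      = ∑ i, ∑ j, (if G.Adj i j then f j i else 0) := by
    rw [Finset.sum_comm]
    refine Finset.sum_congr rfl fun i _ => Finset.sum_congr rfl fun j _ => ?_
    by_cases h : G.Adj i j
    · rw [if_pos h, if_pos (G.adj_symm h)]
    · rw [if_neg h, if_neg (fun h' => h (G.adj_symm h'))]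
  have hdouble : (2:ℝ) * ∑ i, (Φ x i - Φ y i) * (x i - y i)
      = ∑ i, ∑ j, (if G.Adj i j then f i j + f j i else 0) := by
    rw [two_mul, hsum]
    nth_rewrite 2 [hswap]
    rw [← Finset.sum_add_distrib]
    refine Finset.sum_congr rfl fun i _ => ?_
    rw [← Finset.sum_add_distrib]
    refine Finset.sum_congr rfl fun j _ => ?_
    by_cases h : G.Adj i j <;> simp [h]
  have hle : ∑ i, ∑ j, (if G.Adj i j then f i j + f j i else 0) ≤ 0 := by
    refine Finset.sum_nonpos fun i _ => Finset.sum_nonpos fun j _ => ?_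
    by_cases h : G.Adj i j
    · rw [if_pos h]; exact key i j
    · rw [if_neg h]
  linarith [hdouble ▸ hle]
end

section
/- Let φ : ℝ → ℝ → ℝ be antisymmetric and monotone (x - y ≤ v - w ⟹ φ(x,y) ≤ φ(v,w)), let α > 0, and let ρ : V → ℝ. Then the equilibrium equation Σ_{j ∈ Nbr(i)} φ(c(j), c(i)) + ρ(i) - α·c(i) = 0 for all i has at most one solution c : V → ℝ. -/
theorem stmt_4 {V : Type} [Fintype V] [DecidableEq V]
    (G : SimpleGraph V) [DecidableRel G.Adj]
    (φ : ℝ → ℝ → ℝ)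
    (hanti : ∀ x y, φ x y = -φ y x)
    (hmono : ∀ x y v w : ℝ, x - y ≤ v - w → φ x y ≤ φ v w)
    (α : ℝ) (hα : 0 < α) (ρ : V → ℝ)
    (x y : V → ℝ)
    (hx : ∀ i, (∑ j ∈ G.neighborFinset i, φ (x j) (x i)) + ρ i - α * x i = 0)
    (hy : ∀ i, (∑ j ∈ G.neighborFinset i, φ (y j) (y i)) + ρ i - α * y i = 0) :
    x = y := by
  set d : V → ℝ := fun i => x i - y i with hd
  set A : V → V → ℝ := fun i j => φ (x j) (x i) - φ (y j) (y i) with hA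
  have hAskew : ∀ i j, A j i = -A i j := by
    intro i j
    simp only [hA, hanti (x i) (x j), hanti (y i) (y j)]
    ring
  have hpair : ∀ i j, A i j * d i + A j i * d j ≤ 0 := by
    intro i j
    have : A i j * d i + A j i * d j = A i j * (d i - d j) := by
      rw [hAskew i j]; ring
    rw [this]
    rcases le_total (d j) (d i) with h | h
    · have h1 : x j - x i ≤ y j - y i := by simp only [hd] at h; linarith
      have h2 : A i j ≤ 0 := sub_nonpos.2 (hmono _ _ _ _ h1)
      exact mul_nonpos_of_nonpos_of_nonneg h2 (by linarith)
    · have h1 : y j - y i ≤ x j - x i := by simp only [hd] at h; linarith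
      have h2 : 0 ≤ A i j := sub_nonneg.2 (hmono _ _ _ _ h1)
      exact mul_nonpos_of_nonneg_of_nonpos h2 (by linarith)
  have hrow : ∀ i, (∑ j ∈ G.neighborFinset i, A i j) = α * d i := by
    intro i
    have hxi := hx i
    have hyi := hy i
    simp only [hA, Finset.sum_sub_distrib, hd]
    linarith
  have hS : (∑ i, (∑ j ∈ G.neighborFinset i, A i j) * d i) = α * ∑ i, d i ^ 2 := by
    rw [Finset.mul_sum]
    refine Finset.sum_congr rfl fun i _ => ?_
    rw [hrow i]; ring
  -- rewrite sum over neighborFinset as filtered sum over univ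
  have hfil : ∀ (g : V → V → ℝ) i, (∑ j ∈ G.neighborFinset i, g i j)
      = ∑ j, if G.Adj i j then g i j else 0 := by
    intro g i
    rw [SimpleGraph.neighborFinset_eq_filter, Finset.sum_filter]
  have hswap : (∑ i, ∑ j ∈ G.neighborFinset i, A i j * d i)
      = ∑ i, ∑ j ∈ G.neighborFinset i, A j i * d j := by
    simp only [hfil (fun i j => A i j * d i), hfil (fun i j => A j i * d j)]
    rw [Finset.sum_comm]
    refine Finset.sum_congr rfl fun i _ => Finset.sum_congr rfl fun j _ => ?_
    by_cases h : G.Adj i j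
    · rw [if_pos h, if_pos (G.adj_symm h)]
    · rw [if_neg h, if_neg (fun h' => h (G.adj_symm h'))]
  have hSle : (∑ i, (∑ j ∈ G.neighborFinset i, A i j) * d i) ≤ 0 := by
    have h2 : (2:ℝ) * ∑ i, ∑ j ∈ G.neighborFinset i, A i j * d i
        = ∑ i, ∑ j ∈ G.neighborFinset i, (A i j * d i + A j i * d j) := by
      simp only [Finset.sum_add_distrib]
      rw [← hswap]; ring
    have hle : (∑ i, ∑ j ∈ G.neighborFinset i, (A i j * d i + A j i * d j)) ≤ 0 := by
      refine Finset.sum_nonpos fun i _ => Finset.sum_nonpos fun j _ => hpair i j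
    have : (∑ i, ∑ j ∈ G.neighborFinset i, A i j * d i) ≤ 0 := by linarith
    calc (∑ i, (∑ j ∈ G.neighborFinset i, A i j) * d i)
        = ∑ i, ∑ j ∈ G.neighborFinset i, A i j * d i := by
          refine Finset.sum_congr rfl fun i _ => ?_
          rw [Finset.sum_mul]
      _ ≤ 0 := this
  have hsum0 : (∑ i, d i ^ 2) = 0 := by
    have h1 : α * ∑ i, d i ^ 2 ≤ 0 := by rw [← hS]; exact hSle
    have h2 : (0:ℝ) ≤ ∑ i, d i ^ 2 := Finset.sum_nonneg fun i _ => sq_nonneg _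
    nlinarith
  funext i
  have : d i ^ 2 = 0 := by
    have := (Finset.sum_eq_zero_iff_of_nonneg (fun i _ => sq_nonneg (d i))).1 hsum0 i
      (Finset.mem_univ i)
    exact this
  have : d i = 0 := by nlinarith [this]
  simp only [hd] at this
  linarith
end

section
/- Let b : V → ℝ satisfy Σ_{i∈C} b(i) = 0 on every connected component C of an undirected forest G, and let Π be the signed incidence matrix of an orientation of G. Then there exists a unique vector π : E → ℝ with Π π = b. -/
open Classical in
theorem stmt_13 {V E : Type} [Fintype V] [Fintype E] [DecidableEq V]
    (s t : E → V) (hloop : ∀ e, s e ≠ t e)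
    (hnopar : ∀ e f, ((s e = s f ∧ t e = t f) ∨ (s e = t f ∧ t e = s f)) → e = f)
    (hforest : (SimpleGraph.fromRel (fun i j => ∃ e, s e = i ∧ t e = j)).IsAcyclic)
    (Inc : Matrix V E ℝ)
    (hInc : ∀ l k, Inc l k = if t k = l then 1 else if s k = l then -1 else 0)
    (b : V → ℝ)
    (hb : ∀ C : (SimpleGraph.fromRel (fun i j => ∃ e, s e = i ∧ t e = j)).ConnectedComponent,
      ∑ i ∈ Finset.univ.filter
        (fun i => (SimpleGraph.fromRel (fun i j => ∃ e, s e = i ∧ t e = j)).connectedComponentMk i = C),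
        b i = 0) :
    ∃! π : E → ℝ, Inc.mulVec π = b := by
  classical
  set r : V → V → Prop := fun i j => ∃ e, s e = i ∧ t e = j with hr
  set G := SimpleGraph.fromRel r with hG
  set D : E → SimpleGraph V := fun e => G.deleteEdges {s(s e, t e)} with hD
  have hadj : ∀ e, G.Adj (s e) (t e) := fun e => ⟨hloop e, Or.inl ⟨e, rfl, rfl⟩⟩
  have hDle : ∀ e, D e ≤ G := fun e => SimpleGraph.deleteEdges_le _
  have hbridge : ∀ e, ¬ (D e).Reachable (s e) (t e) := by
    intro e
    have h1 := (SimpleGraph.isAcyclic_iff_forall_adj_isBridge.mp hforest) (hadj e)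
    exact SimpleGraph.isBridge_iff.mp h1
  have hedge : ∀ e f : E, s(s f, t f) = s(s e, t e) → f = e := by
    intro e f h
    rw [Sym2.eq_iff] at h
    rcases h with ⟨h1, h2⟩ | ⟨h1, h2⟩
    · exact hnopar f e (Or.inl ⟨h1, h2⟩)
    · exact hnopar f e (Or.inr ⟨h1, h2⟩)
  have hsurv : ∀ e f : E, f ≠ e → (D e).Adj (s f) (t f) := by
    intro e f hfe
    rw [hD, SimpleGraph.deleteEdges_adj]
    exact ⟨hadj f, fun hmem => hfe (hedge e f (Set.mem_singleton_iff.mp hmem))⟩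
  -- every vertex reachable to (t e) in G is on one of the two sides in D e
  have hside : ∀ (e : E) (u : V), G.Reachable u (t e) →
      (D e).Reachable u (s e) ∨ (D e).Reachable u (t e) := by
    have main : ∀ (e : E) (u x : V), G.Walk u x →
        ((D e).Reachable x (s e) ∨ (D e).Reachable x (t e)) →
        ((D e).Reachable u (s e) ∨ (D e).Reachable u (t e)) := by
      intro e u x w
      induction w with
      | nil => exact id
      | cons h p ih =>
        intro hx
        have ihx := ih hx
        rename_i a c hac
        by_cases hcase : s(a, c) = s(s e, t e)
        · rw [Sym2.eq_iff] at hcase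
          rcases hcase with ⟨h1, _⟩ | ⟨h1, _⟩
          · exact Or.inl (by rw [h1])
          · exact Or.inr (by rw [h1])
        · have hadj' : (D e).Adj a c := by
            rw [hD, SimpleGraph.deleteEdges_adj]
            exact ⟨h, by simpa using hcase⟩
          rcases ihx with h' | h'
          · exact Or.inl (hadj'.reachable.trans h')
          · exact Or.inr (hadj'.reachable.trans h')
    intro e u hu
    obtain ⟨w⟩ := hu
    exact main e u (t e) w (Or.inr (SimpleGraph.Reachable.refl _))
  -- the two sides sum to zero
  have hS0 : ∀ e : E,
      (∑ i ∈ Finset.univ.filter (fun i => (D e).Reachable i (s e)), b i) +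
      (∑ i ∈ Finset.univ.filter (fun i => (D e).Reachable i (t e)), b i) = 0 := by
    intro e
    have hdisj : Disjoint (Finset.univ.filter fun i => (D e).Reachable i (s e))
        (Finset.univ.filter fun i => (D e).Reachable i (t e)) := by
      rw [Finset.disjoint_filter]
      intro i _ h1 h2
      exact hbridge e (h1.symm.trans h2)
    have hunion : (Finset.univ.filter fun i => (D e).Reachable i (s e)) ∪
        (Finset.univ.filter fun i => (D e).Reachable i (t e)) =
        Finset.univ.filter
          (fun i => G.connectedComponentMk i = G.connectedComponentMk (t e)) := by
      ext i
      simp only [Finset.mem_union, Finset.mem_filter, Finset.mem_univ, true_and]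
      rw [SimpleGraph.ConnectedComponent.eq]
      constructor
      · rintro (h | h)
        · exact (h.mono (hDle e)).trans (hadj e).reachable
        · exact h.mono (hDle e)
      · intro h; exact hside e i h
    rw [← Finset.sum_union hdisj, hunion]
    exact hb _
  set S : E → ℝ := fun e =>
    ∑ i ∈ Finset.univ.filter (fun i => (D e).Reachable i (t e)), b i with hSdef
  -- uniqueness of the value of π at each edge
  have hA : ∀ π : E → ℝ, Inc.mulVec π = b → ∀ e, π e = S e := by
    intro π hπ e
    set Be := Finset.univ.filter (fun i => (D e).Reachable i (t e)) with hBe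
    have hte : t e ∈ Be := by
      rw [hBe, Finset.mem_filter]; exact ⟨Finset.mem_univ _, SimpleGraph.Reachable.refl _⟩
    have hse : s e ∉ Be := by
      rw [hBe, Finset.mem_filter]
      rintro ⟨-, h⟩; exact hbridge e h
    have hcoef : ∀ f : E, (∑ i ∈ Be, Inc i f) = if f = e then 1 else 0 := by
      intro f
      have hbody : ∀ i, Inc i f =
          (if t f = i then (1:ℝ) else 0) + (if s f = i then (-1:ℝ) else 0) := by
        intro i
        rw [hInc]
        by_cases h1 : t f = i <;> by_cases h2 : s f = i
        · exact absurd (h2.trans h1.symm) (hloop f)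
        · simp [h1, h2]
        · simp [h1, h2]
        · simp [h1, h2]
      rw [Finset.sum_congr rfl (fun i _ => hbody i), Finset.sum_add_distrib,
        Finset.sum_ite_eq, Finset.sum_ite_eq]
      by_cases hfe : f = e
      · subst hfe
        rw [if_pos hte, if_neg hse]; norm_num
      · have hiff : s f ∈ Be ↔ t f ∈ Be := by
          have had := hsurv e f hfe
          rw [hBe, Finset.mem_filter, Finset.mem_filter]
          constructor
          · rintro ⟨-, h⟩; exact ⟨Finset.mem_univ _, had.symm.reachable.trans h⟩
          · rintro ⟨-, h⟩; exact ⟨Finset.mem_univ _, had.reachable.trans h⟩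
        rw [if_neg hfe]
        by_cases hm : t f ∈ Be
        · rw [if_pos hm, if_pos (hiff.mpr hm)]; norm_num
        · rw [if_neg hm, if_neg (fun h => hm (hiff.mp h))]; norm_num
    have hchain : S e = ∑ f ∈ Finset.univ, (∑ i ∈ Be, Inc i f) * π f := by
      calc S e = ∑ i ∈ Be, b i := rfl
        _ = ∑ i ∈ Be, Inc.mulVec π i := by rw [hπ]
        _ = ∑ i ∈ Be, ∑ f ∈ Finset.univ, Inc i f * π f := by
            refine Finset.sum_congr rfl fun i _ => ?_
            rfl
        _ = ∑ f ∈ Finset.univ, ∑ i ∈ Be, Inc i f * π f := Finset.sum_comm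
        _ = ∑ f ∈ Finset.univ, (∑ i ∈ Be, Inc i f) * π f := by
            refine Finset.sum_congr rfl fun f _ => ?_
            rw [Finset.sum_mul]
    rw [hchain, Finset.sum_congr rfl (fun f _ => by rw [hcoef f])]
    rw [Finset.sum_congr rfl (fun f (_ : f ∈ Finset.univ) => (ite_mul (f = e) (1:ℝ) 0 (π f)).trans (by rw [one_mul, zero_mul]))]
    rw [Finset.sum_ite_eq' Finset.univ e π, if_pos (Finset.mem_univ e)]
  -- key: unique "bad" incident edge for i ≠ v reachable to v
  have hkey : ∀ (v i : V), i ≠ v → G.Reachable i v →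
      ∃ f₀ : E, (s f₀ = v ∨ t f₀ = v) ∧ ¬ (D f₀).Reachable i v ∧
        ∀ f : E, (s f = v ∨ t f = v) → ¬ (D f).Reachable i v → f = f₀ := by
    intro v i hne hreach
    obtain ⟨w⟩ := hreach
    set p : G.Walk i v := (w.toPath : G.Path i v).val with hp
    have hpath : p.IsPath := w.toPath.property
    obtain ⟨u', ha, q, hq⟩ := SimpleGraph.Walk.exists_eq_cons_of_ne hne.symm p.reverse
    have hqpath : (SimpleGraph.Walk.cons ha q).IsPath := by
      rw [← hq]; exact hpath.reverse
    have hvq : v ∉ q.support := ((SimpleGraph.Walk.cons_isPath_iff ha q).mp hqpath).2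
    have hpeq : p = (SimpleGraph.Walk.cons ha q).reverse := by
      rw [← hq, SimpleGraph.Walk.reverse_reverse]
    -- get the edge f₀ realizing the adjacency v ~ u'
    have ha' : v ≠ u' ∧ (r v u' ∨ r u' v) := (SimpleGraph.fromRel_adj r v u').mp ha
    have hf₀ : ∃ f₀ : E, (s f₀ = v ∨ t f₀ = v) ∧ s(s f₀, t f₀) = s(v, u') := by
      rcases ha'.2 with ⟨f₀, h1, h2⟩ | ⟨f₀, h1, h2⟩
      · exact ⟨f₀, Or.inl h1, by rw [h1, h2]⟩
      · exact ⟨f₀, Or.inr h2, by rw [h1, h2, Sym2.eq_swap]⟩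
    obtain ⟨f₀, hf₀inc, hf₀e⟩ := hf₀
    -- the walk q avoids the edge of f₀
    have hqe : ∀ ed ∈ q.edges, ed ∉ ({s(s f₀, t f₀)} : Set (Sym2 V)) := by
      intro ed hed hmem
      rw [Set.mem_singleton_iff] at hmem
      rw [hmem, hf₀e] at hed
      exact hvq (q.fst_mem_support_of_mem_edges hed)
    refine ⟨f₀, hf₀inc, ?_, ?_⟩
    · -- ¬ (D f₀).Reachable i v
      intro hcontra
      have hqr : ∀ ed ∈ q.reverse.edges, ed ∉ ({s(s f₀, t f₀)} : Set (Sym2 V)) := by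
        intro ed hed
        rw [SimpleGraph.Walk.edges_reverse, List.mem_reverse] at hed
        exact hqe ed hed
      have hiu' : (D f₀).Reachable i u' :=
        ⟨(q.reverse.toDeleteEdges {s(s f₀, t f₀)} hqr)⟩
      have huv : (D f₀).Reachable u' v := hiu'.symm.trans hcontra
      rw [Sym2.eq_iff] at hf₀e
      rcases hf₀e with ⟨h1, h2⟩ | ⟨h1, h2⟩
      · exact hbridge f₀ (by rw [h1, h2]; exact huv.symm)
      · exact hbridge f₀ (by rw [h1, h2]; exact huv)
    · -- uniqueness
      intro f hfinc hnr
      by_contra hff₀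
      have hpavoid : ∀ ed ∈ p.edges, ed ∉ ({s(s f, t f)} : Set (Sym2 V)) := by
        intro ed hed hmem
        rw [Set.mem_singleton_iff] at hmem
        rw [hpeq, SimpleGraph.Walk.edges_reverse, List.mem_reverse,
          SimpleGraph.Walk.edges_cons] at hed
        rcases List.mem_cons.mp hed with h | h
        · rw [hmem] at h
          exact hff₀ (hedge f₀ f (h.trans hf₀e.symm))
        · rw [hmem] at h
          rcases hfinc with hv | hv
          · rw [hv] at h
            exact hvq (q.fst_mem_support_of_mem_edges h)
          · rw [hv] at h
            exact hvq (q.snd_mem_support_of_mem_edges h)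
      exact hnr ⟨p.toDeleteEdges {s(s f, t f)} hpavoid⟩
  -- existence
  have hB : Inc.mulVec S = b := by
    funext v
    set T := Finset.univ.filter (fun f : E => s f = v ∨ t f = v) with hT
    set C := Finset.univ.filter (fun i => G.Reachable i v) with hC
    have hzero : ∀ f ∈ Finset.univ, f ∉ T → Inc v f * S f = 0 := by
      intro f _ hf
      have h1 : ¬ (s f = v ∨ t f = v) := fun h =>
        hf (Finset.mem_filter.mpr ⟨Finset.mem_univ f, h⟩)
      have h2 : Inc v f = 0 := by
        rw [hInc, if_neg (fun h => h1 (Or.inr h)), if_neg (fun h => h1 (Or.inl h))]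
      rw [h2, zero_mul]
    have hstep1 : ∑ f ∈ Finset.univ, Inc v f * S f =
        ∑ f ∈ T, (∑ i ∈ Finset.univ.filter (fun i => (D f).Reachable i v), b i) := by
      rw [← Finset.sum_subset (Finset.subset_univ T) hzero]
      refine Finset.sum_congr rfl fun f hf => ?_
      have hSf : S f = ∑ i ∈ Finset.univ.filter (fun i => (D f).Reachable i (t f)), b i := rfl
      rcases (Finset.mem_filter.mp hf).2 with hv | hv
      · have htf : t f ≠ v := fun h => hloop f (hv.trans h.symm)
        rw [hInc, if_neg htf, if_pos hv, ← hv]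
        have h0 := hS0 f
        rw [← hSf] at h0
        linarith
      · have hsf : s f ≠ v := fun h => hloop f (h.trans hv.symm)
        rw [hInc, if_pos hv, one_mul, ← hv]
    have hstep2 : ∑ f ∈ T, (∑ i ∈ Finset.univ.filter (fun i => (D f).Reachable i v), b i)
        = ∑ i ∈ Finset.univ,
            ((T.filter (fun f => (D f).Reachable i v)).card : ℝ) * b i := by
      have h1 : ∀ f ∈ T,
          (∑ i ∈ Finset.univ.filter (fun i => (D f).Reachable i v), b i) =
          ∑ i ∈ Finset.univ, if (D f).Reachable i v then b i else 0 :=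
        fun f _ => Finset.sum_filter _ _
      rw [Finset.sum_congr rfl h1, Finset.sum_comm]
      refine Finset.sum_congr rfl fun i _ => ?_
      rw [← Finset.sum_filter, Finset.sum_const, nsmul_eq_mul]
    have hCzero : ∀ i ∈ Finset.univ, i ∉ C →
        ((T.filter (fun f => (D f).Reachable i v)).card : ℝ) * b i = 0 := by
      intro i _ hi
      have hnr : ¬ G.Reachable i v := fun h =>
        hi (Finset.mem_filter.mpr ⟨Finset.mem_univ i, h⟩)
      have hempty : T.filter (fun f => (D f).Reachable i v) = ∅ := by
        rw [Finset.filter_eq_empty_iff]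
        intro f _
        exact fun h => hnr (h.mono (hDle f))
      rw [hempty]
      simp
    have hstep3 : ∑ i ∈ Finset.univ,
        ((T.filter (fun f => (D f).Reachable i v)).card : ℝ) * b i =
        ∑ i ∈ C, ((T.filter (fun f => (D f).Reachable i v)).card : ℝ) * b i :=
      (Finset.sum_subset (Finset.subset_univ C) hCzero).symm
    have hcard : ∀ i ∈ C, ((T.filter (fun f => (D f).Reachable i v)).card : ℝ) =
        ((T.card : ℝ) - 1) + (if i = v then 1 else 0) := by
      intro i hi
      have hir : G.Reachable i v := (Finset.mem_filter.mp hi).2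
      by_cases hiv : i = v
      · subst hiv
        rw [Finset.filter_true_of_mem (fun f _ => SimpleGraph.Reachable.refl _), if_pos rfl]
        ring
      · obtain ⟨f₀, hf₀T, hf₀bad, hf₀uniq⟩ := hkey v i hiv hir
        have hf₀mem : f₀ ∈ T := Finset.mem_filter.mpr ⟨Finset.mem_univ _, hf₀T⟩
        have hfilter : T.filter (fun f => (D f).Reachable i v) = T.erase f₀ := by
          ext f
          rw [Finset.mem_filter, Finset.mem_erase]
          constructor
          · rintro ⟨hfT, hfr⟩
            exact ⟨fun h => hf₀bad (h ▸ hfr), hfT⟩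
          · rintro ⟨hff₀, hfT⟩
            refine ⟨hfT, ?_⟩
            by_contra hnr
            exact hff₀ (hf₀uniq f (Finset.mem_filter.mp hfT).2 hnr)
        rw [hfilter, Finset.card_erase_of_mem hf₀mem, if_neg hiv,
          Nat.cast_sub (Finset.one_le_card.mpr ⟨f₀, hf₀mem⟩)]
        norm_num
    have hCsum : ∑ i ∈ C, b i = 0 := by
      have hCeq : C = Finset.univ.filter
          (fun i => G.connectedComponentMk i = G.connectedComponentMk v) := by
        ext i
        simp only [hC, Finset.mem_filter, Finset.mem_univ, true_and,
          SimpleGraph.ConnectedComponent.eq]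
      rw [hCeq]
      exact hb (G.connectedComponentMk v)
    have hvC : v ∈ C := Finset.mem_filter.mpr ⟨Finset.mem_univ _, SimpleGraph.Reachable.refl _⟩
    have hmv : Inc.mulVec S v = ∑ f ∈ Finset.univ, Inc v f * S f := rfl
    rw [hmv, hstep1, hstep2, hstep3, Finset.sum_congr rfl (fun i hi => by rw [hcard i hi])]
    have hsplit : ∀ i : V, (((T.card : ℝ) - 1) + (if i = v then 1 else 0)) * b i =
        ((T.card : ℝ) - 1) * b i + (if i = v then b i else 0) := by
      intro i
      by_cases h : i = v <;> simp [h] <;> ring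
    rw [Finset.sum_congr rfl (fun i _ => hsplit i), Finset.sum_add_distrib,
      ← Finset.mul_sum, hCsum, Finset.sum_ite_eq' C v b, if_pos hvC]
    ring
  exact ⟨S, hB, fun π hπ => funext fun e => hA π hπ e⟩
end

section
/- Let φ be antisymmetric and monotone in the difference, α > 0, ρ : V → ℝ, and suppose x, y : V → ℝ both satisfy the equilibrium Σ_{j∈Nbr(i)} φ(·) + ρ(i) - α·(·)(i) = 0. Then α·‖x - y‖² = ⟨Φx - Φy, x - y⟩ where Φ is the transport operator; combining with ⟨Φx - Φy, x - y⟩ ≤ 0 gives x = y. -/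
theorem stmt_19 {V : Type} [Fintype V] [DecidableEq V]
    (G : SimpleGraph V) [DecidableRel G.Adj]
    (φ : ℝ → ℝ → ℝ)
    (hanti : ∀ x y, φ x y = -φ y x)
    (hmono : ∀ x y v w : ℝ, x - y ≤ v - w → φ x y ≤ φ v w)
    (α : ℝ) (hα : 0 < α) (ρ : V → ℝ)
    (Φ : (V → ℝ) → V → ℝ)
    (hΦ : ∀ d i, Φ d i = ∑ j ∈ G.neighborFinset i, φ (d j) (d i))
    (x y : V → ℝ)
    (hx : ∀ i, Φ x i + ρ i - α * x i = 0)
    (hy : ∀ i, Φ y i + ρ i - α * y i = 0) :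
    α * (∑ i, (x i - y i) ^ 2) = ∑ i, (Φ x i - Φ y i) * (x i - y i) ∧ x = y := by
  have key : ∀ i, Φ x i - Φ y i = α * (x i - y i) := by
    intro i; have h1 := hx i; have h2 := hy i; nlinarith
  have heq : α * (∑ i, (x i - y i) ^ 2) = ∑ i, (Φ x i - Φ y i) * (x i - y i) := by
    rw [Finset.mul_sum]
    refine Finset.sum_congr rfl fun i _ => ?_
    rw [key i]; ring
  refine ⟨heq, ?_⟩
  set c : V → V → ℝ := fun i j => φ (x j) (x i) - φ (y j) (y i) with hc
  set b : V → ℝ := fun i => x i - y i with hb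
  have hfull : (∑ i, (Φ x i - Φ y i) * (x i - y i))
      = ∑ i, ∑ j, (if G.Adj i j then c i j * b i else 0) := by
    refine Finset.sum_congr rfl fun i _ => ?_
    rw [hΦ, hΦ, ← Finset.sum_sub_distrib, Finset.sum_mul,
      SimpleGraph.neighborFinset_eq_filter, Finset.sum_filter]
  have hswap : (∑ i, ∑ j, (if G.Adj i j then c i j * b i else 0))
      = ∑ i, ∑ j, (if G.Adj i j then -(c i j * b j) else 0) := by
    rw [Finset.sum_comm]
    refine Finset.sum_congr rfl fun i _ => Finset.sum_congr rfl fun j _ => ?_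
    by_cases h : G.Adj j i
    · rw [if_pos h, if_pos h.symm]
      simp only [hc]
      rw [hanti (x i) (x j), hanti (y i) (y j)]
      ring
    · rw [if_neg h, if_neg (fun h' => h h'.symm)]
  have h2S : 2 * (∑ i, (Φ x i - Φ y i) * (x i - y i))
      = ∑ i, ∑ j, (if G.Adj i j then c i j * (b i - b j) else 0) := by
    rw [two_mul, hfull]
    nth_rewrite 2 [hswap]
    rw [← Finset.sum_add_distrib]
    refine Finset.sum_congr rfl fun i _ => ?_
    rw [← Finset.sum_add_distrib]
    refine Finset.sum_congr rfl fun j _ => ?_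
    by_cases h : G.Adj i j
    · simp [h]; ring
    · simp [h]
  have hterm : ∀ i j, c i j * (b i - b j) ≤ 0 := by
    intro i j
    rcases le_total (b i) (b j) with h | h
    · have h1 : y j - y i ≤ x j - x i := by simp only [hb] at h; linarith
      have h2 : φ (y j) (y i) ≤ φ (x j) (x i) := hmono _ _ _ _ h1
      have : 0 ≤ c i j := by simp only [hc]; linarith
      nlinarith
    · have h1 : x j - x i ≤ y j - y i := by simp only [hb] at h; linarith
      have h2 : φ (x j) (x i) ≤ φ (y j) (y i) := hmono _ _ _ _ h1
      have : c i j ≤ 0 := by simp only [hc]; linarith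
      nlinarith
  have hSle : (∑ i, (Φ x i - Φ y i) * (x i - y i)) ≤ 0 := by
    have : 2 * (∑ i, (Φ x i - Φ y i) * (x i - y i)) ≤ 0 := by
      rw [h2S]
      apply Finset.sum_nonpos
      intro i _
      apply Finset.sum_nonpos
      intro j _
      by_cases h : G.Adj i j
      · rw [if_pos h]; exact hterm i j
      · rw [if_neg h]
    linarith
  have hsq : (∑ i, (x i - y i) ^ 2) = 0 := by
    have hnn : 0 ≤ ∑ i, (x i - y i) ^ 2 :=
      Finset.sum_nonneg fun i _ => sq_nonneg _
    nlinarith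
  funext i
  have := (Finset.sum_eq_zero_iff_of_nonneg (fun i _ => sq_nonneg (x i - y i))).mp hsq i (Finset.mem_univ i)
  have : x i - y i = 0 := by nlinarith [this]
  linarith
end
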